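/- Let Σ_pred be an n×n real symmetric positive semidefinite matrix, R a p×p real symmetric matrix, K an n×p real matrix, and Φ a p×n real matrix. For an n×p real matrix L define f(L) := (I − L Φ) Σ_pred (I − L Φ)ᵀ + L R Lᵀ + (I − L Φ) K Lᵀ + L Kᵀ (I − L Φ)ᵀ, and set G := R + Φ Σ_pred Φᵀ − Φ K − Kᵀ Φᵀ. If G is positive definite, then L* := (Σ_pred Φᵀ − K) G⁻¹ is the unique global minimizer of the function L ↦ Tr f(L) over all n×p real matrices: Tr f(L*) ≤ Tr f(L) for all L, with equality only if L = L*. -/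

import Mathlib

open Matrix

/-- The posterior covariance of the SSIE state estimate as a function of the gain `L`:
`f(L) = (I − L Φ) Σ_pred (I − L Φ)ᵀ + L R Lᵀ + (I − L Φ) K Lᵀ + L Kᵀ (I − L Φ)ᵀ`. -/
def postCov {n p : ℕ} (Spred : Matrix (Fin n) (Fin n) ℝ) (R : Matrix (Fin p) (Fin p) ℝ)
    (K : Matrix (Fin n) (Fin p) ℝ) (Φ : Matrix (Fin p) (Fin n) ℝ)
    (L : Matrix (Fin n) (Fin p) ℝ) : Matrix (Fin n) (Fin n) ℝ :=
  (1 - L * Φ) * Spred * (1 - L * Φ)ᵀ + L * R * Lᵀ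
    + (1 - L * Φ) * K * Lᵀ + L * Kᵀ * (1 - L * Φ)ᵀ

/-- Proposition 3: for symmetric positive semidefinite `Σ_pred`, symmetric `R`, and
`G = R + Φ Σ_pred Φᵀ − Φ K − Kᵀ Φᵀ` positive definite, the gain
`L* = (Σ_pred Φᵀ − K) G⁻¹` is the unique global minimizer of `L ↦ Tr f(L)`. -/
theorem ssie_optimal_gain {n p : ℕ}
    (Spred : Matrix (Fin n) (Fin n) ℝ) (R : Matrix (Fin p) (Fin p) ℝ)
    (K : Matrix (Fin n) (Fin p) ℝ) (Φ : Matrix (Fin p) (Fin n) ℝ)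
    (hS : Spred.PosSemidef) (hR : Rᵀ = R)
    (G : Matrix (Fin p) (Fin p) ℝ)
    (hG : G = R + Φ * Spred * Φᵀ - Φ * K - Kᵀ * Φᵀ)
    (hGpd : G.PosDef)
    (Lstar : Matrix (Fin n) (Fin p) ℝ)
    (hLstar : Lstar = (Spred * Φᵀ - K) * G⁻¹) :
    ∀ L : Matrix (Fin n) (Fin p) ℝ,
      (postCov Spred R K Φ Lstar).trace ≤ (postCov Spred R K Φ L).trace ∧
        ((postCov Spred R K Φ Lstar).trace = (postCov Spred R K Φ L).trace → L = Lstar) := by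
  have hSt : Spredᵀ = Spred := by simpa using hS.1.eq
  have hdet : IsUnit G.det := isUnit_iff_ne_zero.mpr (ne_of_gt hGpd.det_pos)
  set C := Spred * Φᵀ - K with hC
  set Ct := Φ * Spred - Kᵀ with hCt
  have hGsym : Gᵀ = G := by
    rw [hG]; simp only [transpose_sub, transpose_add, transpose_mul, transpose_transpose, hSt, hR,
      Matrix.mul_assoc]
    abel
  have hL'G : Lstar * G = C := by
    rw [hLstar, Matrix.mul_assoc, Matrix.nonsing_inv_mul G hdet, Matrix.mul_one]
  have hGL't : G * Lstarᵀ = Ct := by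
    have := congrArg Matrix.transpose hL'G
    simp only [transpose_mul, hGsym, hC, transpose_sub, hSt, transpose_transpose] at this
    rw [this, hCt]
  have hA : ∀ M : Matrix (Fin n) (Fin p) ℝ,
      postCov Spred R K Φ M = Spred + M * G * Mᵀ - M * Ct - C * Mᵀ := by
    intro M
    simp only [postCov, hG, hC, hCt, transpose_sub, transpose_add, transpose_one,
      transpose_mul, hSt, hR, Matrix.sub_mul, Matrix.mul_sub, Matrix.add_mul, Matrix.mul_add,
      Matrix.one_mul, Matrix.mul_one, Matrix.mul_assoc]
    abel
  have hsq : ∀ M : Matrix (Fin n) (Fin p) ℝ,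
      postCov Spred R K Φ M
        = postCov Spred R K Φ Lstar + (M - Lstar) * G * (M - Lstar)ᵀ := by
    intro M
    have e2 : Lstar * Ct = C * Lstarᵀ := by rw [← hGL't, ← Matrix.mul_assoc, hL'G]
    have e1 : (M - Lstar) * G * (M - Lstar)ᵀ
        = M * G * Mᵀ - M * (G * Lstarᵀ) - Lstar * G * Mᵀ + Lstar * G * Lstarᵀ := by
      simp only [transpose_sub, Matrix.sub_mul, Matrix.mul_sub, Matrix.mul_assoc]
      abel
    rw [hA M, hA Lstar, e1, hGL't, hL'G, e2]
    abel
  intro L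
  have htr := congrArg Matrix.trace (hsq L)
  rw [trace_add] at htr
  set M := L - Lstar with hM
  have hq : ∀ i, 0 ≤ M i ⬝ᵥ G *ᵥ M i := fun i => by simpa using hGpd.posSemidef.dotProduct_mulVec_nonneg (M i)
  have hdiag : ∀ i, (M * G * Mᵀ) i i = M i ⬝ᵥ G *ᵥ M i := by
    intro i
    simp only [Matrix.mul_apply, Matrix.transpose_apply, dotProduct, Matrix.mulVec,
      Finset.sum_mul, Finset.mul_sum, mul_assoc]
    exact Finset.sum_comm
  have hDq : (M * G * Mᵀ).trace = ∑ i, M i ⬝ᵥ G *ᵥ M i := by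
    simp only [Matrix.trace, Matrix.diag]
    exact Finset.sum_congr rfl fun i _ => hdiag i
  have htr0 : 0 ≤ (M * G * Mᵀ).trace := by
    rw [hDq]; exact Finset.sum_nonneg fun i _ => hq i
  constructor
  · linarith [htr]
  · intro he
    have hz0 : (M * G * Mᵀ).trace = 0 := by linarith [htr]
    rw [hDq] at hz0
    have hz : ∀ i ∈ Finset.univ, M i ⬝ᵥ G *ᵥ M i = 0 :=
      (Finset.sum_eq_zero_iff_of_nonneg fun i _ => hq i).1 hz0
    have hM0 : M = 0 := by
      ext i j
      have hMi : M i = 0 := by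
        by_contra hne
        exact absurd (hz i (Finset.mem_univ i))
          (ne_of_gt (by simpa using hGpd.dotProduct_mulVec_pos hne))
      simpa using congrFun hMi j
    have := sub_eq_zero.mp (hM ▸ hM0)
    exact this
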